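/- For any 0 ≤ Q ≤ 1, the function f(x) = 1 + φ(√(Q + (1-Q)x)) - φ(√x) is monotonically increasing in x on [0,1]. -/

import Mathlib

noncomputable def phi (x : ℝ) : ℝ :=
  1 - (1/2) * (1 + x) * Real.logb 2 (1 + x) - (1/2) * (1 - x) * Real.logb 2 (1 - x)

noncomputable def Lf (t : ℝ) : ℝ := Real.log (1 + t) - Real.log (1 - t)

lemma hasDerivAt_Lf {t : ℝ} (h1 : -1 < t) (h2 : t < 1) :
    HasDerivAt Lf (1/(1+t) + 1/(1-t)) t := by
  have hp : (0:ℝ) < 1 + t := by linarith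
  have hm : (0:ℝ) < 1 - t := by linarith
  have d1 : HasDerivAt (fun t : ℝ => Real.log (1 + t)) (1/(1+t)) t := by
    have := (Real.hasDerivAt_log hp.ne').comp t ((hasDerivAt_id t).const_add 1)
    simpa [one_div, Function.comp_def] using this
  have d2 : HasDerivAt (fun t : ℝ => Real.log (1 - t)) (-(1/(1-t))) t := by
    have := (Real.hasDerivAt_log hm.ne').comp t ((hasDerivAt_id t).neg.const_add 1)
    simpa [one_div, sub_eq_add_neg, Function.comp_def] using this
  show HasDerivAt (fun t => Real.log (1 + t) - Real.log (1 - t)) _ t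
  simpa [sub_neg_eq_add, Pi.sub_def] using d1.sub d2

lemma two_mul_le_Lf {t : ℝ} (h0 : 0 ≤ t) (h1 : t < 1) : 2 * t ≤ Lf t := by
  have key : MonotoneOn (fun t => Lf t - 2 * t) (Set.Ico 0 1) := by
    apply monotoneOn_of_deriv_nonneg (convex_Ico 0 1)
    · intro x hx
      exact (((hasDerivAt_Lf (by linarith [hx.1]) hx.2).sub
        ((hasDerivAt_id x).const_mul 2)).continuousAt).continuousWithinAt
    · intro x hx
      rw [interior_Ico] at hx
      exact (((hasDerivAt_Lf (by linarith [hx.1]) hx.2).sub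
        ((hasDerivAt_id x).const_mul 2)).differentiableAt).differentiableWithinAt
    · intro x hx
      rw [interior_Ico] at hx
      obtain ⟨hx0, hx1⟩ := hx
      have hd : HasDerivAt (fun t => Lf t - 2 * t) (1/(1+x) + 1/(1-x) - 2) x := by
        simpa [Pi.sub_def] using (hasDerivAt_Lf (show (-1:ℝ) < x by linarith) hx1).sub ((hasDerivAt_id x).const_mul 2)
      rw [hd.deriv]
      have hp : (0:ℝ) < 1 + x := by linarith
      have hm : (0:ℝ) < 1 - x := by linarith
      rw [div_add_div _ _ hp.ne' hm.ne', sub_nonneg, le_div_iff₀ (by positivity)]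
      nlinarith
  have := key (Set.mem_Ico.2 ⟨le_refl 0, by norm_num⟩) (Set.mem_Ico.2 ⟨h0, h1⟩) h0
  simp only [Lf, Real.log_one, sub_zero, mul_zero, add_zero] at this
  simp only [Lf]
  linarith [this]

lemma Lf_nonneg {t : ℝ} (h0 : 0 ≤ t) (h1 : t < 1) : 0 ≤ Lf t := by
  have := two_mul_le_Lf h0 h1; linarith

lemma chi_anti : AntitoneOn (fun t => (1 - t^2) * Lf t / t) (Set.Ioo 0 1) := by
  have hder : ∀ x ∈ Set.Ioo (0:ℝ) 1, HasDerivAt (fun t : ℝ => (1 - t^2) * Lf t / t)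
      ((((-(2*x)) * Lf x + (1 - x^2) * (1/(1+x) + 1/(1-x))) * x - (1 - x^2) * Lf x * 1) / x^2) x := by
    intro x hx
    have hdL : HasDerivAt Lf (1/(1+x) + 1/(1-x)) x := hasDerivAt_Lf (by linarith [hx.1]) hx.2
    have h1 : HasDerivAt (fun t : ℝ => 1 - t^2) (-(2*x)) x := by
      simpa using ((hasDerivAt_id x).pow 2).const_sub 1
    exact (h1.mul hdL).div (hasDerivAt_id x) hx.1.ne'
  apply antitoneOn_of_deriv_nonpos (convex_Ioo 0 1)
  · exact fun x hx => ((hder x hx).continuousAt).continuousWithinAt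
  · rw [interior_Ioo]
    exact fun x hx => ((hder x hx).differentiableAt).differentiableWithinAt
  · rw [interior_Ioo]
    intro x hx
    obtain ⟨hx0, hx1⟩ := hx
    have hp : (0:ℝ) < 1 + x := by linarith
    have hm : (0:ℝ) < 1 - x := by linarith
    rw [(hder x ⟨hx0, hx1⟩).deriv]
    have hL2 : 2 * x ≤ Lf x := two_mul_le_Lf hx0.le hx1
    have key : (1 - x^2) * (1/(1+x) + 1/(1-x)) = 2 := by field_simp; ring
    rw [key]
    apply div_nonpos_of_nonpos_of_nonneg _ (by positivity)
    nlinarith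

lemma chi_key {t s : ℝ} (ht : 0 < t) (hts : t ≤ s) (hs : s < 1) :
    (1 - s^2) * Lf s / s ≤ (1 - t^2) * Lf t / t :=
  chi_anti ⟨ht, lt_of_le_of_lt hts hs⟩ ⟨lt_of_lt_of_le ht hts, hs⟩ hts

lemma phi_eq : phi = fun t => 1 - ((1+t) * Real.log (1+t) + (1-t) * Real.log (1-t)) / (2 * Real.log 2) := by
  funext t
  have h2 : Real.log 2 ≠ 0 := ne_of_gt (Real.log_pos (by norm_num))
  simp only [phi, Real.logb]
  field_simp
  ring

lemma continuous_phi : Continuous phi := by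
  rw [phi_eq]
  have c1 : Continuous fun t : ℝ => (1+t) * Real.log (1+t) := by
    simpa [Function.comp_def] using Real.continuous_mul_log.comp (by continuity : Continuous fun t:ℝ => 1+t)
  have c2 : Continuous fun t : ℝ => (1-t) * Real.log (1-t) := by
    simpa [Function.comp_def] using Real.continuous_mul_log.comp (by continuity : Continuous fun t:ℝ => 1-t)
  exact continuous_const.sub ((c1.add c2).div_const _)

lemma hasDerivAt_phi {t : ℝ} (h1 : -1 < t) (h2 : t < 1) :
    HasDerivAt phi (-(Lf t) / (2 * Real.log 2)) t := by
  have hp : (0:ℝ) < 1 + t := by linarith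
  have hm : (0:ℝ) < 1 - t := by linarith
  have d1 : HasDerivAt (fun t : ℝ => (1+t) * Real.log (1+t)) (Real.log (1+t) + 1) t := by
    have := (Real.hasDerivAt_mul_log hp.ne').comp t ((hasDerivAt_id t).const_add 1)
    simpa [Function.comp_def] using this
  have d2 : HasDerivAt (fun t : ℝ => (1-t) * Real.log (1-t)) (-(Real.log (1-t) + 1)) t := by
    have := (Real.hasDerivAt_mul_log hm.ne').comp t ((hasDerivAt_id t).neg.const_add 1)
    simpa [sub_eq_add_neg, Function.comp_def] using this
  have d3 := (((d1.add d2).div_const (2 * Real.log 2)).const_sub 1)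
  simp only [Pi.add_def] at d3
  rw [phi_eq]
  refine d3.congr_deriv ?_
  simp only [Lf]
  ring

lemma sqrt_lt_one' {x : ℝ} (h0 : 0 ≤ x) (h1 : x < 1) : Real.sqrt x < 1 := by
  rw [show (1:ℝ) = Real.sqrt 1 by simp]
  exact Real.sqrt_lt_sqrt h0 h1

lemma phi_sqrt_anti : AntitoneOn (fun x : ℝ => phi (Real.sqrt x)) (Set.Icc 0 1) := by
  apply antitoneOn_of_deriv_nonpos (convex_Icc 0 1)
  · exact (continuous_phi.comp Real.continuous_sqrt).continuousOn
  · rw [interior_Icc]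
    intro x hx
    have ht0 : 0 < Real.sqrt x := Real.sqrt_pos.2 hx.1
    have ht1 : Real.sqrt x < 1 := sqrt_lt_one' hx.1.le hx.2
    exact (((hasDerivAt_phi (by linarith) ht1).comp x
      (Real.hasDerivAt_sqrt hx.1.ne')).differentiableAt).differentiableWithinAt
  · rw [interior_Icc]
    intro x hx
    have ht0 : 0 < Real.sqrt x := Real.sqrt_pos.2 hx.1
    have ht1 : Real.sqrt x < 1 := sqrt_lt_one' hx.1.le hx.2
    have hd : HasDerivAt (fun x : ℝ => phi (Real.sqrt x))
        ((-(Lf (Real.sqrt x)) / (2 * Real.log 2)) * (1/(2*Real.sqrt x))) x :=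
      (hasDerivAt_phi (by linarith) ht1).comp x (Real.hasDerivAt_sqrt hx.1.ne')
    rw [hd.deriv]
    have hL : 0 ≤ Lf (Real.sqrt x) := Lf_nonneg ht0.le ht1
    have hlog : 0 < Real.log 2 := Real.log_pos (by norm_num)
    apply mul_nonpos_of_nonpos_of_nonneg
    · apply div_nonpos_of_nonpos_of_nonneg <;> [linarith; positivity]
    · positivity

theorem stmt_1 (Q : ℝ) (hQ0 : 0 ≤ Q) (hQ1 : Q ≤ 1) :
    MonotoneOn (fun x : ℝ => 1 + phi (Real.sqrt (Q + (1 - Q) * x)) - phi (Real.sqrt x))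
      (Set.Icc 0 1) := by
  rcases eq_or_lt_of_le hQ1 with hQ | hQ
  · -- Q = 1
    subst hQ
    have heq : (fun x : ℝ => 1 + phi (Real.sqrt (1 + (1 - 1) * x)) - phi (Real.sqrt x))
        = fun x : ℝ => (1 + phi 1) - phi (Real.sqrt x) := by
      funext x; norm_num
    rw [heq]
    intro a ha b hb hab
    have := phi_sqrt_anti ha hb hab
    simp only at this ⊢
    linarith
  · -- Q < 1
    have hder : ∀ x ∈ Set.Ioo (0:ℝ) 1,
        HasDerivAt (fun x : ℝ => 1 + phi (Real.sqrt (Q + (1 - Q) * x)) - phi (Real.sqrt x))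
          ((-(Lf (Real.sqrt (Q + (1-Q)*x))) / (2 * Real.log 2)) * (1/(2*Real.sqrt (Q + (1-Q)*x)) * (1-Q))
            - (-(Lf (Real.sqrt x)) / (2 * Real.log 2)) * (1/(2*Real.sqrt x))) x := by
      intro x hx
      obtain ⟨hx0, hx1⟩ := hx
      have ha0 : 0 < Q + (1-Q)*x := by nlinarith
      have ha1 : Q + (1-Q)*x < 1 := by nlinarith
      have ht0 : 0 < Real.sqrt x := Real.sqrt_pos.2 hx0
      have ht1 : Real.sqrt x < 1 := sqrt_lt_one' hx0.le hx1
      have hs0 : 0 < Real.sqrt (Q + (1-Q)*x) := Real.sqrt_pos.2 ha0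
      have hs1 : Real.sqrt (Q + (1-Q)*x) < 1 := sqrt_lt_one' ha0.le ha1
      have dA : HasDerivAt (fun x : ℝ => Q + (1-Q)*x) (1-Q) x := by
        simpa using ((hasDerivAt_id x).const_mul (1-Q)).const_add Q
      have dsa : HasDerivAt (fun x : ℝ => Real.sqrt (Q + (1-Q)*x))
          (1/(2*Real.sqrt (Q + (1-Q)*x)) * (1-Q)) x :=
        (Real.hasDerivAt_sqrt ha0.ne').comp x dA
      have dphi1 := (hasDerivAt_phi (by linarith) hs1).comp x dsa
      have dphi2 := (hasDerivAt_phi (by linarith) ht1).comp x (Real.hasDerivAt_sqrt hx0.ne')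
      exact (dphi1.const_add 1).sub dphi2
    apply monotoneOn_of_deriv_nonneg (convex_Icc 0 1)
    · apply Continuous.continuousOn
      exact (continuous_const.add (continuous_phi.comp (Real.continuous_sqrt.comp
        (by continuity)))).sub (continuous_phi.comp Real.continuous_sqrt)
    · rw [interior_Icc]
      exact fun x hx => ((hder x hx).differentiableAt).differentiableWithinAt
    · rw [interior_Icc]
      intro x hx
      rw [(hder x hx).deriv]
      obtain ⟨hx0, hx1⟩ := hx
      have ha0 : 0 < Q + (1-Q)*x := by nlinarith
      have ha1 : Q + (1-Q)*x < 1 := by nlinarith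
      set t := Real.sqrt x with htdef
      set s := Real.sqrt (Q + (1-Q)*x) with hsdef
      have ht0 : 0 < t := Real.sqrt_pos.2 hx0
      have ht1 : t < 1 := sqrt_lt_one' hx0.le hx1
      have hs0 : 0 < s := Real.sqrt_pos.2 ha0
      have hs1 : s < 1 := sqrt_lt_one' ha0.le ha1
      have hts : t ≤ s := Real.sqrt_le_sqrt (by nlinarith)
      have ht2 : t^2 = x := Real.sq_sqrt hx0.le
      have hs2 : s^2 = Q + (1-Q)*x := Real.sq_sqrt ha0.le
      have hchi := chi_key ht0 hts hs1
      have h1t : 0 < 1 - t^2 := by rw [ht2]; linarith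
      have hQs : 1 - s^2 = (1-Q) * (1 - t^2) := by rw [ht2, hs2]; ring
      -- key : (1-Q) * Lf s * t ≤ Lf t * s
      have hchi' : (1 - s^2) * Lf s * t ≤ (1 - t^2) * Lf t * s := by
        rw [div_le_div_iff₀ hs0 ht0] at hchi
        linarith [hchi]
      have hkey : (1-Q) * Lf s * t ≤ Lf t * s := by
        rw [hQs] at hchi'
        nlinarith [hchi', mul_pos hs0 ht0]
      have hlog : 0 < Real.log 2 := Real.log_pos (by norm_num)
      have hre : (-(Lf s) / (2 * Real.log 2)) * (1/(2*s) * (1-Q))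
          - (-(Lf t) / (2 * Real.log 2)) * (1/(2*t))
          = (Lf t * s - (1-Q) * Lf s * t) / (4 * Real.log 2 * s * t) := by
        field_simp
        ring
      rw [hre]
      apply div_nonneg (by linarith) (by positivity)
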